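/- Let T = ℂ² with standard basis e₁, e₂, let d ≥ 0, and let V_d = T ⊗ ℂ[z]/(z^{d+1}) be the vector representation of the truncated current Lie algebra 𝔤_d = 𝔰𝔩₂ ⊗ ℂ[z]/(z^{d+1}). For x ∈ V_d with x ≠ 0, write x = x_n z^n + ... + x_d z^d with x_n ≠ 0 (so n = min.deg x). Then there exists ξ ∈ 𝔤_d with ξ.x = 0 whose constant coefficient ξ₀ ∈ 𝔰𝔩₂ is nonzero. -/

import Mathlib

open Polynomial

private lemma aux2 (p q : ℂ[X]) (hp : p ≠ 0)
    (h : q = 0 ∨ p.rootMultiplicity 0 ≤ q.rootMultiplicity 0) :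
    ∃ n a b, p = X ^ n * a ∧ q = X ^ n * b ∧ a.eval 0 ≠ 0 := by
  set n := p.rootMultiplicity 0 with hn
  have hXC : (X - C (0:ℂ)) = X := by simp
  have hdq : (X : ℂ[X]) ^ n ∣ q := by
    rcases h with h | h
    · simp [h]
    · have := pow_rootMultiplicity_dvd q 0
      rw [hXC] at this
      exact dvd_trans (pow_dvd_pow _ h) this
  obtain ⟨b, hb⟩ := hdq
  refine ⟨n, p /ₘ (X - C 0) ^ n, b, ?_, hb, ?_⟩
  · conv_lhs => rw [← pow_mul_divByMonic_rootMultiplicity_eq p 0]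
    rw [hXC]
  · exact eval_divByMonic_pow_rootMultiplicity_ne_zero 0 hp

private lemma aux (p q : ℂ[X]) (h : p ≠ 0 ∨ q ≠ 0) :
    ∃ n a b, p = X ^ n * a ∧ q = X ^ n * b ∧ (a.eval 0 ≠ 0 ∨ b.eval 0 ≠ 0) := by
  by_cases hp : p = 0
  · have hq : q ≠ 0 := h.resolve_left (by simp [hp])
    obtain ⟨n, a, b, h1, h2, h3⟩ := aux2 q p hq (Or.inl hp)
    exact ⟨n, b, a, h2, h1, Or.inr h3⟩
  · rcases le_or_gt (p.rootMultiplicity 0) (q.rootMultiplicity 0) with hle | hlt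
    · obtain ⟨n, a, b, h1, h2, h3⟩ := aux2 p q hp (Or.inr hle)
      exact ⟨n, a, b, h1, h2, Or.inl h3⟩
    · by_cases hq : q = 0
      · obtain ⟨n, a, b, h1, h2, h3⟩ := aux2 p q hp (Or.inl hq)
        exact ⟨n, a, b, h1, h2, Or.inl h3⟩
      · obtain ⟨n, a, b, h1, h2, h3⟩ := aux2 q p hq (Or.inr hlt.le)
        exact ⟨n, b, a, h2, h1, Or.inr h3⟩

/-- Let `R = ℂ[z]/(z^{d+1})`, `V_d = ℂ² ⊗ R = (Fin 2 → R)` the vector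
representation of the truncated current algebra `𝔤_d = 𝔰𝔩₂ ⊗ R` (trace-zero `2×2` matrices
over `R`, acting by `mulVec`).  For every nonzero `x ∈ V_d` there exists `ξ ∈ 𝔤_d`
annihilating `x` whose constant coefficient is nonzero (i.e. `ξ` is not divisible by `z`). -/
theorem stmt3 (d : ℕ) (x : Fin 2 → Polynomial ℂ ⧸ Ideal.span {(X : Polynomial ℂ) ^ (d + 1)})
    (hx : x ≠ 0) :
    ∃ ξ : Matrix (Fin 2) (Fin 2) (Polynomial ℂ ⧸ Ideal.span {(X : Polynomial ℂ) ^ (d + 1)}),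
      ξ.trace = 0 ∧ ξ.mulVec x = 0 ∧
      ¬∃ B : Matrix (Fin 2) (Fin 2) (Polynomial ℂ ⧸ Ideal.span {(X : Polynomial ℂ) ^ (d + 1)}),
        ξ = (Ideal.Quotient.mk (Ideal.span {(X : Polynomial ℂ) ^ (d + 1)}) X) • B := by
  let I : Ideal (Polynomial ℂ) := Ideal.span {(X : Polynomial ℂ) ^ (d + 1)}
  let mk := Ideal.Quotient.mk I
  -- lift the components to polynomials
  obtain ⟨p0, hp0⟩ := Ideal.Quotient.mk_surjective (x 0)
  obtain ⟨p1, hp1⟩ := Ideal.Quotient.mk_surjective (x 1)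
  -- at least one lift is not in I; reduce to nonzero lifts via aux
  have hne : p0 ≠ 0 ∨ p1 ≠ 0 := by
    rcases Function.ne_iff.mp hx with ⟨i, hi⟩
    fin_cases i
    · left; rintro rfl; exact hi (by simpa using hp0.symm)
    · right; rintro rfl; exact hi (by simpa using hp1.symm)
  obtain ⟨n, a, b, ha, hb, hab⟩ := aux p0 p1 hne
  -- evaluation at 0 descends to the quotient
  have hker : ∀ r ∈ I, (Polynomial.evalRingHom (0:ℂ)) r = 0 := by
    intro r hr
    rw [Ideal.mem_span_singleton] at hr
    obtain ⟨c, rfl⟩ := hr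
    simp
  let ε : (Polynomial ℂ ⧸ I) →+* ℂ := Ideal.Quotient.lift I (Polynomial.evalRingHom 0) hker
  have hεX : ε (mk X) = 0 := by simp [ε, mk]
  set y0 := mk a with hy0
  set y1 := mk b with hy1
  refine ⟨!![y0 * y1, -(y0 * y0); y1 * y1, -(y0 * y1)], ?_, ?_, ?_⟩
  · simp [Matrix.trace_fin_two]
  · funext i
    have hx0 : x 0 = mk X ^ n * y0 := by rw [← hp0, ha]; simp [mk]; rfl
    have hx1 : x 1 = mk X ^ n * y1 := by rw [← hp1, hb]; simp [mk]; rfl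
    fin_cases i <;>
      simp [Matrix.mulVec, dotProduct, Fin.sum_univ_two, hx0, hx1] <;> ring
  · rintro ⟨B, hB⟩
    have h01 : ε (-(y0 * y0)) = 0 := by
      have := congrArg (fun M => ε (M 0 1)) hB
      have h' : ε (Ideal.Quotient.mk (Ideal.span {(X : Polynomial ℂ) ^ (d + 1)}) X) = 0 := hεX
      simpa [hεX, h'] using this
    have h10 : ε (y1 * y1) = 0 := by
      have := congrArg (fun M => ε (M 1 0)) hB
      have h' : ε (Ideal.Quotient.mk (Ideal.span {(X : Polynomial ℂ) ^ (d + 1)}) X) = 0 := hεX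
      simpa [hεX, h'] using this
    have he0 : ε y0 = a.eval 0 := by simp [ε, hy0, mk]
    have he1 : ε y1 = b.eval 0 := by simp [ε, hy1, mk]
    rcases hab with hA | hA
    · apply hA
      have : ε y0 * ε y0 = 0 := by
        have := h01; rw [map_neg, neg_eq_zero, map_mul] at this; exact this
      rcases mul_eq_zero.mp this with h | h <;> rw [← he0] <;> exact h
    · apply hA
      have : ε y1 * ε y1 = 0 := by rw [← map_mul]; exact h10
      rcases mul_eq_zero.mp this with h | h <;> rw [← he1] <;> exact h
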